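/- arXiv:0803.0371 — 5 statements merged into one kernel-verified Lean document; each statement's English description precedes it below -/
import Mathlib

section
/- For any invertible 2×2 real matrix D and any 3×2 real matrices A, B, the pairing A × B := c₁(A) × c₁(B) + c₂(A) × c₂(B) satisfies (A D⁻¹) × (B Dᵀ) = A × B. -/
open Matrix

/-- The cross-product pairing `A × B = c₁(A) × c₁(B) + c₂(A) × c₂(B)` of two 3×2 matrices. -/
def matPair (A B : Matrix (Fin 3) (Fin 2) ℝ) : Fin 3 → ℝ :=
  crossProduct (fun r => A r 0) (fun r => B r 0) +
  crossProduct (fun r => A r 1) (fun r => B r 1)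

theorem stmt1 (D : Matrix (Fin 2) (Fin 2) ℝ) (hD : IsUnit D.det)
    (A B : Matrix (Fin 3) (Fin 2) ℝ) :
    matPair (A * D⁻¹) (B * Dᵀ) = matPair A B := by
  have hd : D.det ≠ 0 := by
    simpa using hD.ne_zero
  have hdet : D 0 0 * D 1 1 - D 0 1 * D 1 0 = D.det := (Matrix.det_fin_two D).symm
  have hinv : D⁻¹ = (D.det)⁻¹ • !![D 1 1, -D 0 1; -D 1 0, D 0 0] := by
    rw [Matrix.inv_def, Matrix.adjugate_fin_two, Ring.inverse_eq_inv]
  funext i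
  fin_cases i <;>
  · simp [matPair, crossProduct, hinv, mul_apply, Fin.sum_univ_two, transpose_apply]
    field_simp
    rw [← hdet]
    ring
end

section
/- Let α, β, e₁, e₂ ∈ ℝ³ satisfy e₁ × α + e₂ × β = 0, where e₁, e₂ are the first two standard basis vectors, |α| = a, |β| = b, α·β = 0, and a > b > 0. Then α = ±a e₁ and β = ±b e₂. -/
open Matrix

theorem stmt6 (a b : ℝ) (hab : a > b) (hb : b > 0) (α β : Fin 3 → ℝ)
    (hα : α ⬝ᵥ α = a ^ 2) (hβ : β ⬝ᵥ β = b ^ 2) (hαβ : α ⬝ᵥ β = 0)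
    (heq : crossProduct ![1, 0, 0] α + crossProduct ![0, 1, 0] β = 0) :
    (α = a • ![1, 0, 0] ∨ α = -(a • ![1, 0, 0])) ∧
    (β = b • ![0, 1, 0] ∨ β = -(b • ![0, 1, 0])) := by
  have h0 := congrFun heq 0
  have h1 := congrFun heq 1
  have h2 := congrFun heq 2
  simp [crossProduct, dotProduct, Fin.sum_univ_three] at h0 h1 h2 hα hβ hαβ
  -- h0 : β 2 = 0 (roughly), h1 : α 2 = 0, h2 : α 1 = β 0
  have hβ2 : β 2 = 0 := by linarith
  have hα2 : α 2 = 0 := by linarith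
  have ht : α 1 = β 0 := by linarith
  have hsum : α 1 * (α 0 + β 1) = 0 := by
    linear_combination hαβ + α 0 * ht - β 2 * hα2
  have ht0 : α 1 = 0 := by
    rcases mul_eq_zero.mp hsum with h | h
    · exact h
    · exfalso
      have hsq : α 0 * α 0 = β 1 * β 1 := by linear_combination (α 0 - β 1) * h
      have hab2 : a ^ 2 = b ^ 2 := by
        linear_combination -hα + hβ + hsq + (α 1 + β 0) * ht + α 2 * hα2 - β 2 * hβ2
      nlinarith [hab2]
  have hβ0 : β 0 = 0 := by linarith
  constructor
  · have h : α 0 = a ∨ α 0 = -a := by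
      have : (α 0 - a) * (α 0 + a) = 0 := by nlinarith
      rcases mul_eq_zero.mp this with h | h
      · left; linarith
      · right; linarith
    rcases h with h | h
    · left; funext i; fin_cases i <;> simp [h, hα2, ht0]
    · right; funext i; fin_cases i <;> simp [h, hα2, ht0]
  · have h : β 1 = b ∨ β 1 = -b := by
      have : (β 1 - b) * (β 1 + b) = 0 := by nlinarith
      rcases mul_eq_zero.mp this with h | h
      · left; linarith
      · right; linarith
    rcases h with h | h
    · left; funext i; fin_cases i <;> simp [h, hβ2, hβ0]
    · right; funext i; fin_cases i <;> simp [h, hβ2, hβ0]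
end

section
/- The functions φ(t) solving I₃ φ̈ = −(a ± b) sin φ give rise to solutions of the full Euler–Poisson equations via ω = φ̇ e₃, α = a(e₁ cos φ − e₂ sin φ), β = ± b(e₁ sin φ + e₂ cos φ): i.e., these formulas satisfy ẇ = M × ω + e₁ × α + e₂ × β-type equations with M = I ω + λ e₃, I = diag(I₁, I₂, I₃), and satisfy α̇ = α × ω, β̇ = β × ω. -/
open Matrix

theorem stmt9 (I₁ I₂ I₃ a b lam ε : ℝ) (hI₃ : I₃ ≠ 0) (hε : ε = 1 ∨ ε = -1)
    (φ φ' : ℝ → ℝ)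
    (hφ : ∀ t, HasDerivAt φ (φ' t) t)
    (hφ' : ∀ t, HasDerivAt φ' (-((a + ε * b) / I₃) * Real.sin (φ t)) t)
    (ω α β M : ℝ → Fin 3 → ℝ)
    (hω : ∀ t, ω t = ![0, 0, φ' t])
    (hα : ∀ t, α t = ![a * Real.cos (φ t), -(a * Real.sin (φ t)), 0])
    (hβ : ∀ t, β t = ![ε * b * Real.sin (φ t), ε * b * Real.cos (φ t), 0])
    (hM : ∀ t, M t = ![I₁ * ω t 0, I₂ * ω t 1, I₃ * ω t 2 + lam]) :
    (∀ t i, HasDerivAt (fun s => M s i)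
      ((crossProduct (M t) (ω t) + crossProduct ![1, 0, 0] (α t) +
        crossProduct ![0, 1, 0] (β t)) i) t) ∧
    (∀ t i, HasDerivAt (fun s => α s i) (crossProduct (α t) (ω t) i) t) ∧
    (∀ t i, HasDerivAt (fun s => β s i) (crossProduct (β t) (ω t) i) t) := by
  have hsin : ∀ t, HasDerivAt (fun s => Real.sin (φ s)) (Real.cos (φ t) * φ' t) t :=
    fun t => (Real.hasDerivAt_sin (φ t)).comp t (hφ t)
  have hcos : ∀ t, HasDerivAt (fun s => Real.cos (φ s)) (-Real.sin (φ t) * φ' t) t :=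
    fun t => (Real.hasDerivAt_cos (φ t)).comp t (hφ t)
  refine ⟨?_, ?_, ?_⟩ <;> intro t i <;> fin_cases i <;>
    simp only [hM, hω, hα, hβ, cross_apply, Pi.add_apply, Fin.mk_zero, Fin.mk_one, Fin.reduceFinMk,
      Fin.isValue, Matrix.cons_val_zero, Matrix.cons_val_one, Matrix.head_cons,
      Matrix.cons_val_two, Matrix.tail_cons, Matrix.cons_val_fin_one] <;>
    ring_nf
  · exact hasDerivAt_const t 0
  · exact hasDerivAt_const t 0
  · have := ((hφ' t).const_mul I₃).add_const lam
    convert this using 1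
    · rfl
    · rfl
    field_simp
    ring
  · exact ((hcos t).const_mul a).congr_deriv (by ring)
  · exact (((hsin t).const_mul a).neg).congr_deriv (by ring)
  · exact hasDerivAt_const t 0
  · exact ((hsin t).const_mul (ε * b)).congr_deriv (by ring)
  · exact ((hcos t).const_mul (ε * b)).congr_deriv (by ring)
  · exact hasDerivAt_const t 0
end

section
/- The generalized Kowalevski integral K = (ω₁² − ω₂² + α₁ − β₂)² + (2ω₁ω₂ + α₂ + β₁)² + 2λ[(ω₃−λ)(ω₁² + ω₂²) + 2ω₁α₃ + 2ω₂β₃] is a first integral of the Kowalevski gyrostat equations in two constant fields. -/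
theorem stmt11 (lam : ℝ) (ω₁ ω₂ ω₃ α₁ α₂ α₃ β₁ β₂ β₃ : ℝ → ℝ)
    (h1 : ∀ t, HasDerivAt ω₁ ((ω₂ t * (ω₃ t - lam) + β₃ t) / 2) t)
    (h2 : ∀ t, HasDerivAt ω₂ ((-(ω₁ t * (ω₃ t - lam)) - α₃ t) / 2) t)
    (h3 : ∀ t, HasDerivAt ω₃ (α₂ t - β₁ t) t)
    (h4 : ∀ t, HasDerivAt α₁ (α₂ t * ω₃ t - α₃ t * ω₂ t) t)
    (h5 : ∀ t, HasDerivAt α₂ (α₃ t * ω₁ t - α₁ t * ω₃ t) t)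
    (h6 : ∀ t, HasDerivAt α₃ (α₁ t * ω₂ t - α₂ t * ω₁ t) t)
    (h7 : ∀ t, HasDerivAt β₁ (β₂ t * ω₃ t - β₃ t * ω₂ t) t)
    (h8 : ∀ t, HasDerivAt β₂ (β₃ t * ω₁ t - β₁ t * ω₃ t) t)
    (h9 : ∀ t, HasDerivAt β₃ (β₁ t * ω₂ t - β₂ t * ω₁ t) t) :
    ∀ t, HasDerivAt
      (fun t => (ω₁ t ^ 2 - ω₂ t ^ 2 + α₁ t - β₂ t) ^ 2 +
        (2 * ω₁ t * ω₂ t + α₂ t + β₁ t) ^ 2 +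
        2 * lam * ((ω₃ t - lam) * (ω₁ t ^ 2 + ω₂ t ^ 2) +
          2 * ω₁ t * α₃ t + 2 * ω₂ t * β₃ t)) 0 t := by
  intro t
  have H := ((((((h1 t).pow 2).sub ((h2 t).pow 2)).add (h4 t)).sub (h8 t)).pow 2 |>.add
      ((((((h1 t).const_mul 2).mul (h2 t)).add (h5 t)).add (h7 t)).pow 2)) |>.add
      ((((h3 t).sub_const lam |>.mul (((h1 t).pow 2).add ((h2 t).pow 2))).add
        ((((h1 t).const_mul 2).mul (h6 t)).add (((h2 t).const_mul 2).mul (h9 t)))).const_mul (2*lam))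
  convert H using 1
  · rfl
  · rfl
  · ext s; simp only [Pi.add_apply, Pi.sub_apply, Pi.mul_apply, Pi.pow_apply]; ring
  · simp only [Pi.add_apply, Pi.sub_apply, Pi.mul_apply, Pi.pow_apply]; ring
end

section
/- The function G = (1/4)(M_α² + M_β²) + (1/2)(ω₃ − λ) M_γ − b² α₁ − a² β₂, where M_α = (Iω + λe₃)·α, M_β = (Iω + λe₃)·β, M_γ = (Iω + λe₃)·(α × β) with I = diag(2,2,1), is a first integral of the Kowalevski gyrostat equations in two constant fields restricted to the level set |α|² = a², |β|² = b², α·β = 0. -/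
theorem stmt12 (a b lam : ℝ) (ω₁ ω₂ ω₃ α₁ α₂ α₃ β₁ β₂ β₃ : ℝ → ℝ)
    (h1 : ∀ t, HasDerivAt ω₁ ((ω₂ t * (ω₃ t - lam) + β₃ t) / 2) t)
    (h2 : ∀ t, HasDerivAt ω₂ ((-(ω₁ t * (ω₃ t - lam)) - α₃ t) / 2) t)
    (h3 : ∀ t, HasDerivAt ω₃ (α₂ t - β₁ t) t)
    (h4 : ∀ t, HasDerivAt α₁ (α₂ t * ω₃ t - α₃ t * ω₂ t) t)
    (h5 : ∀ t, HasDerivAt α₂ (α₃ t * ω₁ t - α₁ t * ω₃ t) t)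
    (h6 : ∀ t, HasDerivAt α₃ (α₁ t * ω₂ t - α₂ t * ω₁ t) t)
    (h7 : ∀ t, HasDerivAt β₁ (β₂ t * ω₃ t - β₃ t * ω₂ t) t)
    (h8 : ∀ t, HasDerivAt β₂ (β₃ t * ω₁ t - β₁ t * ω₃ t) t)
    (h9 : ∀ t, HasDerivAt β₃ (β₁ t * ω₂ t - β₂ t * ω₁ t) t)
    (hca : ∀ t, α₁ t ^ 2 + α₂ t ^ 2 + α₃ t ^ 2 = a ^ 2)
    (hcb : ∀ t, β₁ t ^ 2 + β₂ t ^ 2 + β₃ t ^ 2 = b ^ 2)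
    (hcab : ∀ t, α₁ t * β₁ t + α₂ t * β₂ t + α₃ t * β₃ t = 0) :
    ∀ t, HasDerivAt
      (fun t =>
        (1 / 4) * ((2 * ω₁ t * α₁ t + 2 * ω₂ t * α₂ t + (ω₃ t + lam) * α₃ t) ^ 2 +
          (2 * ω₁ t * β₁ t + 2 * ω₂ t * β₂ t + (ω₃ t + lam) * β₃ t) ^ 2) +
        (1 / 2) * (ω₃ t - lam) *
          (2 * ω₁ t * (α₂ t * β₃ t - α₃ t * β₂ t) +
           2 * ω₂ t * (α₃ t * β₁ t - α₁ t * β₃ t) +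
           (ω₃ t + lam) * (α₁ t * β₂ t - α₂ t * β₁ t)) -
        b ^ 2 * α₁ t - a ^ 2 * β₂ t) 0 t := by
  intro t
  have hMa : HasDerivAt (fun t => 2 * ω₁ t * α₁ t + 2 * ω₂ t * α₂ t + (ω₃ t + lam) * α₃ t)
      (2 * ((ω₂ t * (ω₃ t - lam) + β₃ t) / 2) * α₁ t + 2 * ω₁ t * (α₂ t * ω₃ t - α₃ t * ω₂ t) +
       (2 * ((-(ω₁ t * (ω₃ t - lam)) - α₃ t) / 2) * α₂ t + 2 * ω₂ t * (α₃ t * ω₁ t - α₁ t * ω₃ t)) +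
       ((α₂ t - β₁ t) * α₃ t + (ω₃ t + lam) * (α₁ t * ω₂ t - α₂ t * ω₁ t))) t :=
    ((((h1 t).const_mul 2).mul (h4 t)).add (((h2 t).const_mul 2).mul (h5 t))).add
      (((h3 t).add_const lam).mul (h6 t))
  have hMb : HasDerivAt (fun t => 2 * ω₁ t * β₁ t + 2 * ω₂ t * β₂ t + (ω₃ t + lam) * β₃ t)
      (2 * ((ω₂ t * (ω₃ t - lam) + β₃ t) / 2) * β₁ t + 2 * ω₁ t * (β₂ t * ω₃ t - β₃ t * ω₂ t) +
       (2 * ((-(ω₁ t * (ω₃ t - lam)) - α₃ t) / 2) * β₂ t + 2 * ω₂ t * (β₃ t * ω₁ t - β₁ t * ω₃ t)) +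
       ((α₂ t - β₁ t) * β₃ t + (ω₃ t + lam) * (β₁ t * ω₂ t - β₂ t * ω₁ t))) t :=
    ((((h1 t).const_mul 2).mul (h7 t)).add (((h2 t).const_mul 2).mul (h8 t))).add
      (((h3 t).add_const lam).mul (h9 t))
  have hc1 : HasDerivAt (fun t => α₂ t * β₃ t - α₃ t * β₂ t)
      ((α₃ t * ω₁ t - α₁ t * ω₃ t) * β₃ t + α₂ t * (β₁ t * ω₂ t - β₂ t * ω₁ t) -
       ((α₁ t * ω₂ t - α₂ t * ω₁ t) * β₂ t + α₃ t * (β₃ t * ω₁ t - β₁ t * ω₃ t))) t :=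
    ((h5 t).mul (h9 t)).sub ((h6 t).mul (h8 t))
  have hc2 : HasDerivAt (fun t => α₃ t * β₁ t - α₁ t * β₃ t)
      ((α₁ t * ω₂ t - α₂ t * ω₁ t) * β₁ t + α₃ t * (β₂ t * ω₃ t - β₃ t * ω₂ t) -
       ((α₂ t * ω₃ t - α₃ t * ω₂ t) * β₃ t + α₁ t * (β₁ t * ω₂ t - β₂ t * ω₁ t))) t :=
    ((h6 t).mul (h7 t)).sub ((h4 t).mul (h9 t))
  have hc3 : HasDerivAt (fun t => α₁ t * β₂ t - α₂ t * β₁ t)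
      ((α₂ t * ω₃ t - α₃ t * ω₂ t) * β₂ t + α₁ t * (β₃ t * ω₁ t - β₁ t * ω₃ t) -
       ((α₃ t * ω₁ t - α₁ t * ω₃ t) * β₁ t + α₂ t * (β₂ t * ω₃ t - β₃ t * ω₂ t))) t :=
    ((h4 t).mul (h8 t)).sub ((h5 t).mul (h7 t))
  have hMg := ((((h1 t).const_mul 2).mul hc1).add (((h2 t).const_mul 2).mul hc2)).add
      (((h3 t).add_const lam).mul hc3)
  have H := (((((hMa.pow 2).add (hMb.pow 2)).const_mul (1/4)).add
      ((((h3 t).sub_const lam).const_mul (1/2)).mul hMg)).sub ((h4 t).const_mul (b ^ 2))).sub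
      ((h8 t).const_mul (a ^ 2))
  refine H.congr_deriv (Eq.symm ?_)
  simp only [Pi.add_apply, Pi.mul_apply]
  linear_combination (β₁ t * ω₃ t - β₃ t * ω₁ t) * hca t +
    (α₃ t * ω₂ t - α₂ t * ω₃ t) * hcb t +
    (α₃ t * ω₁ t - α₁ t * ω₃ t + β₂ t * ω₃ t - β₃ t * ω₂ t) * hcab t
end
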